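/- arXiv:1407.7090 — 5 statements merged into one kernel-verified Lean document; each statement's English description precedes it below -/
import Mathlib

section
/- Let 0<q<1 and let f(x,t) = ∑_{m=0}^d a_m(t)·x^m be a polynomial of degree d in x whose coefficients a_m:[0,∞)→ℝ are bounded on (0,ε] for some ε>0. For t>0 define b_m(t) := t^{−m} ∫_ℝ f(x,t) h_m(x;t) γ_t(dx), 0≤m≤d. Then: (i) each b_m is bounded on (0,ε]; (ii) if moreover there exist C≥0 and δ>0 with |a_m(t) − a_m(0)| ≤ C·t^δ for all t∈(0,ε] and all m, then, setting b_m(0) := [m]_q!·a_m(0), there exist C'≥0 and δ'>0 with |b_m(t) − b_m(0)| ≤ C'·t^{δ'} for all t∈(0,ε] and all m. -/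
open MeasureTheory

/-- `[n]_q = 1 + q + ⋯ + q^{n-1}`. -/
noncomputable def qNat (q : ℝ) (n : ℕ) : ℝ := ∑ i ∈ Finset.range n, q ^ i

/-- `[n]_q! = [1]_q [2]_q ⋯ [n]_q`. -/
noncomputable def qFact (q : ℝ) (n : ℕ) : ℝ := ∏ i ∈ Finset.range n, qNat q (i + 1)

/-- Monic continuous q-Hermite polynomials: `h_0 = 1`, `h_1 = x`,
`x·h_n(x;t) = h_{n+1}(x;t) + t·[n]_q·h_{n−1}(x;t)`. -/
noncomputable def qH (q : ℝ) : ℕ → ℝ → ℝ → ℝ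
  | 0, _, _ => 1
  | 1, x, _ => x
  | (n + 2), x, t => x * qH q (n + 1) x t - t * qNat q (n + 1) * qH q n x t

lemma qNat_nonneg {q : ℝ} (hq : 0 ≤ q) (n : ℕ) : 0 ≤ qNat q n :=
  Finset.sum_nonneg fun i _ => pow_nonneg hq i

lemma qNat_le {q : ℝ} (hq0 : 0 ≤ q) (hq1 : q < 1) (n : ℕ) : qNat q n ≤ 1 / (1 - q) := by
  have h1 : 0 < 1 - q := by linarith
  have hpow : (0:ℝ) ≤ q ^ n := pow_nonneg hq0 n
  rw [qNat, geom_sum_eq (by intro h; rw [h] at hq1; linarith)]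
  have e : (q ^ n - 1) / (q - 1) = (1 - q ^ n) / (1 - q) := by
    rw [div_eq_div_iff (by linarith) (by linarith)]; ring
  rw [e]
  gcongr
  linarith

lemma qFact_succ (q : ℝ) (n : ℕ) : qFact q (n + 1) = qFact q n * qNat q (n + 1) :=
  Finset.prod_range_succ _ _

lemma qH_cont (q t : ℝ) : ∀ n, Continuous fun x : ℝ => qH q n x t
  | 0 => continuous_const
  | 1 => by simpa [qH] using continuous_id'
  | (n + 2) => by
      have h1 := qH_cont q t (n + 1)
      have h0 := qH_cont q t n
      simp only [qH]; exact (continuous_id'.mul h1).sub (continuous_const.mul h0)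

lemma qH_mul_x (q x t : ℝ) : ∀ n : ℕ,
    x * qH q n x t = qH q (n + 1) x t + t * qNat q n * qH q (n - 1) x t
  | 0 => by simp [qH, qNat]
  | (n + 1) => by
      show x * qH q (n + 1) x t = qH q (n + 2) x t + t * qNat q (n + 1) * qH q n x t
      simp only [qH]; ring

lemma integrable_cont (μ : Measure ℝ) [IsProbabilityMeasure μ] (R : ℝ)
    (hsupp : μ {x : ℝ | |x| ≤ R}ᶜ = 0) (f : ℝ → ℝ) (hf : Continuous f) :
    Integrable f μ := by
  obtain ⟨M, hM⟩ := (isCompact_Icc (a := -R) (b := R)).exists_bound_of_continuousOn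
    hf.continuousOn
  refine Integrable.mono' (integrable_const M) hf.aestronglyMeasurable ?_
  have hae : ∀ᵐ x ∂μ, x ∈ {x : ℝ | |x| ≤ R} := by
    rw [ae_iff]
    exact hsupp
  filter_upwards [hae] with x hx
  exact hM x (Set.mem_Icc.mpr (abs_le.mp hx))

noncomputable def cc (q : ℝ) : ℕ → ℕ → ℝ → ℝ
  | 0, k, _ => if k = 0 then 1 else 0
  | (j + 1), k, t => (if k = 0 then 0 else cc q j (k - 1) t)
      + t * qNat q (k + 1) * cc q j (k + 1) t

lemma cc_zero_of_lt (q t : ℝ) : ∀ j k : ℕ, j < k → cc q j k t = 0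
  | 0, k, h => by simp [cc]; omega
  | (j + 1), k, h => by
      have hk : k ≠ 0 := by omega
      have h1 : j < k - 1 := by omega
      have h2 : j < k + 1 := by omega
      simp [cc, hk, cc_zero_of_lt q t j (k - 1) h1, cc_zero_of_lt q t j (k + 1) h2]

lemma cc_diag (q t : ℝ) : ∀ j : ℕ, cc q j j t = 1
  | 0 => by simp [cc]
  | (j + 1) => by
      simp [cc, cc_diag q t j, cc_zero_of_lt q t j (j + 2) (by omega)]

lemma cc_bound (q : ℝ) (hq0 : 0 < q) (hq1 : q < 1) (T : ℝ) (hT : 0 < T) :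
    ∀ j : ℕ, ∃ K : ℝ, 0 ≤ K ∧ ∀ t ∈ Set.Ioc (0:ℝ) T, ∀ k : ℕ,
      |cc q j k t| ≤ K ∧ (k ≠ j → |cc q j k t| ≤ K * t) := by
  have h1q : 0 < 1 - q := by linarith
  set B : ℝ := 1 / (1 - q) with hB
  have hBnn : 0 ≤ B := by positivity
  intro j
  induction j with
  | zero =>
    refine ⟨1, zero_le_one, fun t ht k => ⟨?_, fun hk => ?_⟩⟩
    · by_cases h : k = 0 <;> simp [cc, h]
    · simp [cc, hk]
      linarith [ht.1]
  | succ j ih =>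
    obtain ⟨K, hKnn, hKb⟩ := ih
    refine ⟨K * (1 + B) * (1 + T), by positivity, fun t ht k => ?_⟩
    obtain ⟨ht0, htT⟩ := ht
    have e : cc q (j + 1) k t = (if k = 0 then 0 else cc q j (k - 1) t)
        + t * qNat q (k + 1) * cc q j (k + 1) t := by simp [cc]
    have hterm2 : |t * qNat q (k + 1) * cc q j (k + 1) t| ≤ t * (B * K) := by
      rw [abs_mul, abs_mul, abs_of_pos ht0, abs_of_nonneg (qNat_nonneg hq0.le _)]
      calc t * qNat q (k + 1) * |cc q j (k + 1) t|
          ≤ (t * B) * K := by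
            apply mul_le_mul (mul_le_mul_of_nonneg_left (qNat_le hq0.le hq1 _) ht0.le)
              (hKb t ⟨ht0, htT⟩ (k + 1)).1 (abs_nonneg _) (by positivity)
        _ = t * (B * K) := by ring
    have hterm1 : |(if k = 0 then 0 else cc q j (k - 1) t)| ≤ K := by
      by_cases h : k = 0
      · simpa [h] using hKnn
      · simpa [h] using (hKb t ⟨ht0, htT⟩ (k - 1)).1
    constructor
    · rw [e]
      calc |_ + _| ≤ K + t * (B * K) := le_trans (abs_add_le _ _) (add_le_add hterm1 hterm2)
        _ ≤ K + T * (B * K) := by nlinarith [mul_nonneg hBnn hKnn]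
        _ ≤ K * (1 + B) * (1 + T) := by nlinarith [mul_nonneg hKnn hBnn, mul_nonneg hKnn hT.le]
    · intro hk
      have hterm1' : |(if k = 0 then 0 else cc q j (k - 1) t)| ≤ K * t := by
        by_cases h : k = 0
        · simp [h]; positivity
        · have hk1 : k - 1 ≠ j := by omega
          simpa [h] using (hKb t ⟨ht0, htT⟩ (k - 1)).2 hk1
      rw [e]
      calc |_ + _| ≤ K * t + t * (B * K) :=
            le_trans (abs_add_le _ _) (add_le_add hterm1' hterm2)
        _ = (K * (1 + B)) * t := by ring
        _ ≤ (K * (1 + B) * (1 + T)) * t := by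
            apply mul_le_mul_of_nonneg_right _ ht0.le
            exact le_mul_of_one_le_right (by positivity) (by linarith)

lemma integral_pow_mul_qH (q : ℝ) (hq0 : 0 < q) (hq1 : q < 1)
    (γ : ℝ → Measure ℝ)
    (hprob : ∀ t : ℝ, 0 < t → IsProbabilityMeasure (γ t))
    (hsupp : ∀ t : ℝ, 0 < t →
      γ t {x : ℝ | |x| ≤ 2 * Real.sqrt t / Real.sqrt (1 - q)}ᶜ = 0)
    (horth : ∀ t : ℝ, 0 < t → ∀ m n : ℕ,
      ∫ x, qH q n x t * qH q m x t ∂(γ t) = if m = n then qFact q n * t ^ n else 0) :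
    ∀ j m : ℕ, ∀ t : ℝ, 0 < t →
      ∫ x, x ^ j * qH q m x t ∂(γ t) = cc q j m t * (qFact q m * t ^ m) := by
  intro j
  induction j with
  | zero =>
    intro m t ht
    have h := horth t ht m 0
    simp only [qH, one_mul, pow_zero] at h ⊢
    rw [h]
    by_cases hm : m = 0 <;> simp [hm, cc, qFact]
  | succ j ih =>
    intro m t ht
    haveI := hprob t ht
    have hint : ∀ k i : ℕ, Integrable (fun x => x ^ i * qH q k x t) (γ t) := fun k i =>
      integrable_cont _ _ (hsupp t ht) _ ((continuous_pow i).mul (qH_cont q t k))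
    have hfun : (fun x : ℝ => x ^ (j + 1) * qH q m x t)
        = fun x => x ^ j * qH q (m + 1) x t
          + (t * qNat q m) * (x ^ j * qH q (m - 1) x t) := by
      funext x
      have h := qH_mul_x q x t m
      calc x ^ (j + 1) * qH q m x t = x ^ j * (x * qH q m x t) := by ring
        _ = _ := by rw [h]; ring
    rw [hfun, integral_add (hint (m + 1) j) ((hint (m - 1) j).const_mul _),
      integral_const_mul, ih (m + 1) t ht, ih (m - 1) t ht]
    cases m with
    | zero => simp [cc, qNat, qFact, Finset.prod_range_one]; ring
    | succ m' =>
      simp only [cc, Nat.add_sub_cancel, Nat.succ_ne_zero, if_false]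
      rw [qFact_succ q (m' + 1), qFact_succ q m']
      ring

/-- if `f(x,t) = ∑_{m≤d} a_m(t) x^m` has coefficients bounded on `(0,ε]`,
then the q-Hermite expansion coefficients `b_m(t) = t^{−m} ∫ f(x,t) h_m(x;t) γ_t(dx)`
are bounded on `(0,ε]`; and if the `a_m` satisfy a Hölder bound `|a_m(t) − a_m(0)| ≤ C t^δ`,
then (with `b_m(0) := [m]_q!·a_m(0)`) the `b_m` satisfy a Hölder bound
`|b_m(t) − b_m(0)| ≤ C' t^{δ'}` on `(0,ε]`. -/
theorem qHermite_expansion_coefficients_bounded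
    (q : ℝ) (hq0 : 0 < q) (hq1 : q < 1)
    (γ : ℝ → Measure ℝ)
    (hprob : ∀ t : ℝ, 0 < t → IsProbabilityMeasure (γ t))
    (hsupp : ∀ t : ℝ, 0 < t →
      γ t {x : ℝ | |x| ≤ 2 * Real.sqrt t / Real.sqrt (1 - q)}ᶜ = 0)
    (horth : ∀ t : ℝ, 0 < t → ∀ m n : ℕ,
      ∫ x, qH q n x t * qH q m x t ∂(γ t) = if m = n then qFact q n * t ^ n else 0)
    (hpush : ∀ t : ℝ, 0 < t → γ t = Measure.map (fun x => Real.sqrt t * x) (γ 1))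
    (d : ℕ) (a : ℕ → ℝ → ℝ) (ε : ℝ) (hε : 0 < ε)
    (ha : ∀ m ≤ d, ∃ M : ℝ, ∀ t ∈ Set.Ioc (0 : ℝ) ε, |a m t| ≤ M)
    (b : ℕ → ℝ → ℝ)
    (hbdef : ∀ m ≤ d, ∀ t : ℝ, 0 < t →
      b m t = t ^ (-(m : ℤ)) *
        ∫ x, (∑ j ∈ Finset.range (d + 1), a j t * x ^ j) * qH q m x t ∂(γ t))
    (hb0 : ∀ m ≤ d, b m 0 = qFact q m * a m 0) :
    (∀ m ≤ d, ∃ M : ℝ, ∀ t ∈ Set.Ioc (0 : ℝ) ε, |b m t| ≤ M) ∧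
    ((∃ C δ : ℝ, 0 ≤ C ∧ 0 < δ ∧
        ∀ m ≤ d, ∀ t ∈ Set.Ioc (0 : ℝ) ε, |a m t - a m 0| ≤ C * t ^ δ) →
      ∃ C' δ' : ℝ, 0 ≤ C' ∧ 0 < δ' ∧
        ∀ m ≤ d, ∀ t ∈ Set.Ioc (0 : ℝ) ε, |b m t - b m 0| ≤ C' * t ^ δ') := by
  -- key expansion of b
  have key : ∀ m ≤ d, ∀ t : ℝ, 0 < t →
      b m t = qFact q m * ∑ j ∈ Finset.range (d + 1), a j t * cc q j m t := by
    intro m hm t ht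
    haveI := hprob t ht
    have hint : ∀ k i : ℕ, Integrable (fun x => x ^ i * qH q k x t) (γ t) := fun k i =>
      integrable_cont _ _ (hsupp t ht) _ ((continuous_pow i).mul (qH_cont q t k))
    rw [hbdef m hm t ht]
    have hfun : (fun x : ℝ => (∑ j ∈ Finset.range (d + 1), a j t * x ^ j) * qH q m x t)
        = fun x => ∑ j ∈ Finset.range (d + 1), a j t * (x ^ j * qH q m x t) := by
      funext x
      rw [Finset.sum_mul]
      exact Finset.sum_congr rfl fun j _ => by ring
    rw [hfun, integral_finset_sum _ fun j _ => (hint m j).const_mul _]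
    have e1 : ∀ j ∈ Finset.range (d + 1),
        ∫ x, a j t * (x ^ j * qH q m x t) ∂(γ t)
          = a j t * (cc q j m t * (qFact q m * t ^ m)) := fun j _ => by
      rw [integral_const_mul, integral_pow_mul_qH q hq0 hq1 γ hprob hsupp horth j m t ht]
    rw [Finset.sum_congr rfl e1]
    have e2 : ∑ j ∈ Finset.range (d + 1), a j t * (cc q j m t * (qFact q m * t ^ m))
        = (qFact q m * ∑ j ∈ Finset.range (d + 1), a j t * cc q j m t) * t ^ m := by
      rw [Finset.mul_sum, Finset.sum_mul]
      exact Finset.sum_congr rfl fun j _ => by ring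
    rw [e2, zpow_neg, zpow_natCast]
    have hne : (t : ℝ) ^ m ≠ 0 := pow_ne_zero m (ne_of_gt ht)
    field_simp
  -- uniform bound on the a's
  have ha' : ∀ m : ℕ, ∃ M : ℝ, m ≤ d → ∀ t ∈ Set.Ioc (0:ℝ) ε, |a m t| ≤ M := by
    intro m
    by_cases h : m ≤ d
    · obtain ⟨M, hM⟩ := ha m h
      exact ⟨M, fun _ => hM⟩
    · exact ⟨0, fun h' => absurd h' h⟩
  choose MA hMA using ha'
  set M0 : ℝ := ∑ j ∈ Finset.range (d + 1), |MA j| with hM0def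
  have hM0nn : 0 ≤ M0 := Finset.sum_nonneg fun i _ => abs_nonneg _
  have hM0 : ∀ j ≤ d, ∀ t ∈ Set.Ioc (0:ℝ) ε, |a j t| ≤ M0 := by
    intro j hj t ht
    calc |a j t| ≤ MA j := hMA j hj t ht
      _ ≤ |MA j| := le_abs_self _
      _ ≤ M0 := Finset.single_le_sum (fun i _ => abs_nonneg (MA i))
          (Finset.mem_range.mpr (Nat.lt_succ_of_le hj))
  -- uniform bound on the cc's
  choose K hK using cc_bound q hq0 hq1 ε hε
  set K0 : ℝ := ∑ j ∈ Finset.range (d + 1), K j with hK0def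
  have hK0nn : 0 ≤ K0 := Finset.sum_nonneg fun i _ => (hK i).1
  have hKle : ∀ j ≤ d, K j ≤ K0 := fun j hj =>
    Finset.single_le_sum (fun i _ => (hK i).1)
      (Finset.mem_range.mpr (Nat.lt_succ_of_le hj))
  have hccB : ∀ j ≤ d, ∀ t ∈ Set.Ioc (0:ℝ) ε, ∀ k, |cc q j k t| ≤ K0 := fun j hj t ht k =>
    le_trans ((hK j).2 t ht k).1 (hKle j hj)
  have hccB2 : ∀ j ≤ d, ∀ t ∈ Set.Ioc (0:ℝ) ε, ∀ k, k ≠ j → |cc q j k t| ≤ K0 * t :=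
    fun j hj t ht k hkj =>
      le_trans (((hK j).2 t ht k).2 hkj)
        (mul_le_mul_of_nonneg_right (hKle j hj) ht.1.le)
  -- bound on qFact
  set F : ℝ := ∑ i ∈ Finset.range (d + 1), |qFact q i| with hFdef
  have hFnn : 0 ≤ F := Finset.sum_nonneg fun i _ => abs_nonneg _
  have hFle : ∀ m ≤ d, |qFact q m| ≤ F := fun m hm =>
    Finset.single_le_sum (f := fun i => |qFact q i|) (fun i _ => abs_nonneg _)
      (Finset.mem_range.mpr (Nat.lt_succ_of_le hm))
  constructor
  · -- part (i)
    intro m hm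
    refine ⟨F * ((d + 1 : ℝ) * (M0 * K0)), fun t ht => ?_⟩
    rw [key m hm t ht.1, abs_mul]
    have hsum : |∑ j ∈ Finset.range (d + 1), a j t * cc q j m t|
        ≤ (d + 1 : ℝ) * (M0 * K0) := by
      calc |∑ j ∈ Finset.range (d + 1), a j t * cc q j m t|
          ≤ ∑ j ∈ Finset.range (d + 1), |a j t * cc q j m t| :=
            Finset.abs_sum_le_sum_abs _ _
        _ ≤ ∑ _j ∈ Finset.range (d + 1), M0 * K0 := by
            refine Finset.sum_le_sum fun j hj => ?_
            rw [abs_mul]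
            exact mul_le_mul (hM0 j (Nat.lt_succ_iff.mp (Finset.mem_range.mp hj)) t ht)
              (hccB j (Nat.lt_succ_iff.mp (Finset.mem_range.mp hj)) t ht m)
              (abs_nonneg _) hM0nn
        _ = (d + 1 : ℝ) * (M0 * K0) := by
            rw [Finset.sum_const, Finset.card_range, nsmul_eq_mul]
            push_cast; ring
    exact mul_le_mul (hFle m hm) hsum (abs_nonneg _) hFnn
  · -- part (ii)
    rintro ⟨C, δ, hC, hδ, hHol⟩
    set δ' : ℝ := min δ 1 with hδ'def
    have hδ'pos : 0 < δ' := lt_min hδ one_pos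
    have hδ'le1 : δ' ≤ 1 := min_le_right _ _
    have hδ'leδ : δ' ≤ δ := min_le_left _ _
    refine ⟨F * C * ε ^ (δ - δ') + F * ((d + 1 : ℝ) * (M0 * K0)) * ε ^ (1 - δ'), δ', ?_,
      hδ'pos, ?_⟩
    · have h1 : (0:ℝ) ≤ ε ^ (δ - δ') := Real.rpow_nonneg hε.le _
      have h2 : (0:ℝ) ≤ ε ^ (1 - δ') := Real.rpow_nonneg hε.le _
      have h3 : (0:ℝ) ≤ (d + 1 : ℝ) * (M0 * K0) := by positivity
      nlinarith [mul_nonneg (mul_nonneg hFnn hC) h1, mul_nonneg (mul_nonneg hFnn h3) h2]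
    · intro m hm t ht
      have ht0 : 0 < t := ht.1
      have hmem : m ∈ Finset.range (d + 1) := Finset.mem_range.mpr (Nat.lt_succ_of_le hm)
      have sum_split : ∑ j ∈ Finset.range (d + 1), a j t * cc q j m t
          = a m t + ∑ j ∈ (Finset.range (d + 1)).erase m, a j t * cc q j m t := by
        rw [← Finset.add_sum_erase _ _ hmem, cc_diag, mul_one]
      have hdiff : b m t - b m 0
          = qFact q m * (a m t - a m 0)
            + qFact q m * ∑ j ∈ (Finset.range (d + 1)).erase m, a j t * cc q j m t := by
        rw [key m hm t ht0, hb0 m hm, sum_split]; ring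
      have H1 : |qFact q m * (a m t - a m 0)| ≤ F * (C * t ^ δ) := by
        rw [abs_mul]
        exact mul_le_mul (hFle m hm) (hHol m hm t ht)
          (abs_nonneg _) hFnn
      have hbound2 : |∑ j ∈ (Finset.range (d + 1)).erase m, a j t * cc q j m t|
          ≤ (d + 1 : ℝ) * (M0 * (K0 * t)) := by
        calc |∑ j ∈ (Finset.range (d + 1)).erase m, a j t * cc q j m t|
            ≤ ∑ j ∈ (Finset.range (d + 1)).erase m, |a j t * cc q j m t| :=
              Finset.abs_sum_le_sum_abs _ _
          _ ≤ ∑ _j ∈ (Finset.range (d + 1)).erase m, M0 * (K0 * t) := by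
              refine Finset.sum_le_sum fun j hj => ?_
              have hjd : j ≤ d := Nat.lt_succ_iff.mp
                (Finset.mem_range.mp (Finset.mem_of_mem_erase hj))
              have hjm : m ≠ j := fun h => (Finset.ne_of_mem_erase hj) h.symm
              rw [abs_mul]
              exact mul_le_mul (hM0 j hjd t ht)
                (hccB2 j hjd t ht m hjm)
                (abs_nonneg _) hM0nn
          _ ≤ (d + 1 : ℝ) * (M0 * (K0 * t)) := by
              rw [Finset.sum_const, nsmul_eq_mul]
              refine mul_le_mul_of_nonneg_right ?_
                (mul_nonneg hM0nn (mul_nonneg hK0nn ht0.le))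
              calc (((Finset.range (d + 1)).erase m).card : ℝ)
                  ≤ ((Finset.range (d + 1)).card : ℝ) := by
                    exact_mod_cast Finset.card_le_card (Finset.erase_subset _ _)
                _ = (d + 1 : ℝ) := by rw [Finset.card_range]; push_cast; ring
      have H2 : |qFact q m * ∑ j ∈ (Finset.range (d + 1)).erase m, a j t * cc q j m t|
          ≤ F * ((d + 1 : ℝ) * (M0 * (K0 * t))) := by
        rw [abs_mul]
        exact mul_le_mul (hFle m hm) hbound2 (abs_nonneg _) hFnn
      -- exponent comparisons
      have h1 : t ^ δ ≤ ε ^ (δ - δ') * t ^ δ' := by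
        have e : t ^ δ = t ^ (δ - δ') * t ^ δ' := by
          rw [← Real.rpow_add ht0]; ring_nf
        rw [e]
        exact mul_le_mul_of_nonneg_right
          (Real.rpow_le_rpow ht0.le ht.2 (by linarith)) (Real.rpow_nonneg ht0.le _)
      have h2 : t ≤ ε ^ (1 - δ') * t ^ δ' := by
        calc t = t ^ (1 - δ') * t ^ δ' := by
              rw [← Real.rpow_add ht0, sub_add_cancel, Real.rpow_one]
          _ ≤ ε ^ (1 - δ') * t ^ δ' :=
            mul_le_mul_of_nonneg_right
              (Real.rpow_le_rpow ht0.le ht.2 (by linarith)) (Real.rpow_nonneg ht0.le _)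
      rw [hdiff]
      have hQ : (0:ℝ) ≤ F * ((d + 1 : ℝ) * (M0 * K0)) := by positivity
      calc |qFact q m * (a m t - a m 0)
            + qFact q m * ∑ j ∈ (Finset.range (d + 1)).erase m, a j t * cc q j m t|
          ≤ |qFact q m * (a m t - a m 0)|
            + |qFact q m * ∑ j ∈ (Finset.range (d + 1)).erase m, a j t * cc q j m t| :=
            abs_add_le _ _
        _ ≤ F * (C * t ^ δ) + F * ((d + 1 : ℝ) * (M0 * (K0 * t))) := add_le_add H1 H2
        _ = (F * C) * t ^ δ + (F * ((d + 1 : ℝ) * (M0 * K0))) * t := by ring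
        _ ≤ (F * C) * (ε ^ (δ - δ') * t ^ δ')
            + (F * ((d + 1 : ℝ) * (M0 * K0))) * (ε ^ (1 - δ') * t ^ δ') :=
            add_le_add (mul_le_mul_of_nonneg_left h1 (mul_nonneg hFnn hC))
              (mul_le_mul_of_nonneg_left h2 hQ)
        _ = (F * C * ε ^ (δ - δ') + F * ((d + 1 : ℝ) * (M0 * K0)) * ε ^ (1 - δ')) * t ^ δ' :=
            by ring
end

section
/- Let 0<q<1 and t>0. Let f:ℂ→ℂ be an entire function (given by a power series with infinite radius of convergence). Let R>0 satisfy R·√(1−q) > 2·√t, and define b_n(t) := t^{−n}·∫_ℝ f(x)·h_n(x;t) γ_t(dx). Then for every n≥0, |b_n(t)| ≤ (max_{|z|=R} |f(z)|)·√([n]_q!)·(2/(R·√(1−q)))^n · R·√(1−q)/(R·√(1−q) − 2·√t). -/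
open MeasureTheory

section QHermiteHelpers
open Polynomial

noncomputable def qHP (q t : ℝ) : ℕ → Polynomial ℝ
  | 0 => 1
  | 1 => X
  | (n+2) => X * qHP q t (n+1) - C (t * qNat q (n+1)) * qHP q t n

lemma qHP_eval (q t x : ℝ) : ∀ n, (qHP q t n).eval x = qH q n x t := by
  have H : ∀ n, (qHP q t n).eval x = qH q n x t ∧ (qHP q t (n+1)).eval x = qH q (n+1) x t := by
    intro n
    induction n with
    | zero => simp [qHP, qH]
    | succ m ih =>
      refine ⟨ih.2, ?_⟩
      show (qHP q t (m+2)).eval x = qH q (m+2) x t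
      simp only [qHP, qH, Polynomial.eval_sub, Polynomial.eval_mul, Polynomial.eval_X,
        Polynomial.eval_C, ih.1, ih.2]
  exact fun n => (H n).1

lemma qHP_monic (q t : ℝ) : ∀ n, (qHP q t n).Monic ∧ (qHP q t n).natDegree = n := by
  have H : ∀ n, ((qHP q t n).Monic ∧ (qHP q t n).natDegree = n) ∧
      ((qHP q t (n+1)).Monic ∧ (qHP q t (n+1)).natDegree = n+1) := by
    intro n
    induction n with
    | zero => refine ⟨⟨monic_one, by simp [qHP]⟩, ⟨monic_X, by simp [qHP]⟩⟩
    | succ m ih =>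
      refine ⟨ih.2, ?_⟩
      have hm : (X * qHP q t (m+1)).Monic := monic_X.mul ih.2.1
      have hdeg : (X * qHP q t (m+1)).natDegree = m + 2 := by
        rw [natDegree_mul X_ne_zero ih.2.1.ne_zero, natDegree_X, ih.2.2]; omega
      have hlt : (C (t * qNat q (m+1)) * qHP q t m).natDegree < (X * qHP q t (m+1)).natDegree := by
        rw [hdeg]
        calc (C (t * qNat q (m+1)) * qHP q t m).natDegree ≤ (qHP q t m).natDegree :=
              natDegree_C_mul_le _ _
          _ = m := ih.1.2
          _ < m + 2 := by omega
      constructor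
      · show (X * qHP q t (m+1) - C (t * qNat q (m+1)) * qHP q t m).Monic
        exact hm.sub_of_left (degree_lt_degree hlt)
      · show (X * qHP q t (m+1) - C (t * qNat q (m+1)) * qHP q t m).natDegree = m + 2
        rw [natDegree_sub_eq_left_of_natDegree_lt hlt, hdeg]
  exact fun n => (H n).1

lemma qH_continuous (q t : ℝ) (n : ℕ) : Continuous (fun x => qH q n x t) := by
  have : (fun x => qH q n x t) = fun x => (qHP q t n).eval x :=
    funext fun x => (qHP_eval q t x n).symm
  rw [this]
  exact (qHP q t n).continuous_aeval

lemma sq_integral_abs_le {μ : Measure ℝ} [IsProbabilityMeasure μ] {h : ℝ → ℝ}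
    (h1 : Integrable h μ) (h2 : Integrable (fun x => h x ^ 2) μ) :
    (∫ x, |h x| ∂μ) ^ 2 ≤ ∫ x, h x ^ 2 ∂μ := by
  set a := ∫ x, |h x| ∂μ with ha
  have habs : Integrable (fun x => |h x|) μ := h1.abs
  have e0 : 0 ≤ ∫ x, (|h x| - a) ^ 2 ∂μ := integral_nonneg fun x => sq_nonneg _
  have expand : ∀ x : ℝ, (|h x| - a) ^ 2 = h x ^ 2 - 2 * a * |h x| + a ^ 2 := by
    intro x
    have : |h x| ^ 2 = h x ^ 2 := sq_abs _
    nlinarith [this]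
  have e1 : ∫ x, (|h x| - a) ^ 2 ∂μ = (∫ x, h x ^ 2 ∂μ) - 2 * a * a + a ^ 2 := by
    simp_rw [expand]
    have i1 : Integrable (fun x => h x ^ 2 - 2 * a * |h x|) μ := h2.sub (habs.const_mul _)
    have i2 : Integrable (fun _ : ℝ => a ^ 2) μ := integrable_const _
    rw [integral_add i1 i2, integral_sub h2 (habs.const_mul _), integral_const_mul,
      integral_const]
    simp [← ha]
  nlinarith [e0, e1]

lemma integrable_of_ae_bdd {μ : Measure ℝ} [IsFiniteMeasure μ] {B : ℝ}
    (hμ : μ {x : ℝ | |x| ≤ B}ᶜ = 0) {E : Type*} [NormedAddCommGroup E]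
    (g : ℝ → E) (hg : Continuous g) : Integrable g μ := by
  obtain ⟨C, hC⟩ := (isCompact_Icc (a := -B) (b := B)).exists_bound_of_continuousOn
    hg.continuousOn
  have hae : ∀ᵐ x ∂μ, |x| ≤ B := by
    rw [ae_iff]
    simpa [Set.compl_setOf] using hμ
  refine ⟨hg.aestronglyMeasurable, ?_⟩
  exact HasFiniteIntegral.of_bounded (C := C)
    (hae.mono fun x hx => hC x (abs_le.mp hx))

lemma ae_bdd {μ : Measure ℝ} {B : ℝ}
    (hμ : μ {x : ℝ | |x| ≤ B}ᶜ = 0) : ∀ᵐ x ∂μ, |x| ≤ B := by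
  rw [ae_iff]
  simpa [Set.compl_setOf] using hμ

lemma qH_orth_monomial {q t : ℝ} {μ : Measure ℝ}
    (hint : ∀ g : ℝ → ℝ, Continuous g → Integrable g μ)
    (horth : ∀ m k : ℕ, ∫ x, qH q k x t * qH q m x t ∂μ =
      if m = k then qFact q k * t ^ k else 0)
    (n : ℕ) : ∀ k, k < n → ∫ x, x ^ k * qH q n x t ∂μ = 0 := by
  intro k
  induction k using Nat.strong_induction_on with
  | _ k ih =>
    intro hkn
    have hqHn : Continuous (fun x => qH q n x t) := qH_continuous q t n
    rcases Nat.eq_zero_or_pos k with rfl | hk0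
    · have h0 : ∀ x : ℝ, x ^ 0 * qH q n x t = qH q 0 x t * qH q n x t := by
        intro x; simp [qH]
      rw [show (fun x => x ^ 0 * qH q n x t) = fun x => qH q 0 x t * qH q n x t
        from funext h0]
      rw [horth n 0, if_neg (by omega)]
    · set r : Polynomial ℝ := X ^ k - qHP q t k with hr
      have hmon := qHP_monic q t k
      have hdegP : (qHP q t k).degree = k := by
        rw [degree_eq_natDegree hmon.1.ne_zero, hmon.2]
      have hdegr : r.degree < k := by
        rw [hr]
        refine lt_of_lt_of_le (degree_sub_lt ?_ (pow_ne_zero _ X_ne_zero) ?_) ?_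
        · rw [degree_X_pow, hdegP]
        · rw [leadingCoeff_X_pow, hmon.1.leadingCoeff]
        · rw [degree_X_pow]
      have hndegr : r.natDegree < k := by
        rcases eq_or_ne r 0 with h0 | h0
        · simpa [h0] using hk0
        · exact natDegree_lt_iff_degree_lt h0 |>.mpr (by exact_mod_cast hdegr)
      have hxk : ∀ x : ℝ, x ^ k = qH q k x t + ∑ j ∈ Finset.range k, r.coeff j * x ^ j := by
        intro x
        have h1 : r.eval x = ∑ j ∈ Finset.range k, r.coeff j * x ^ j :=
          eval_eq_sum_range' hndegr x
        have h2 : r.eval x = x ^ k - qH q k x t := by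
          rw [hr]; simp [qHP_eval q t x k]
        linarith [h1, h2]
      have key : ∀ x : ℝ, x ^ k * qH q n x t =
          qH q k x t * qH q n x t + ∑ j ∈ Finset.range k, r.coeff j * (x ^ j * qH q n x t) := by
        intro x
        rw [hxk x, add_mul, Finset.sum_mul]
        congr 1
        exact Finset.sum_congr rfl fun j _ => by ring
      rw [show (fun x => x ^ k * qH q n x t) = fun x =>
          qH q k x t * qH q n x t + ∑ j ∈ Finset.range k, r.coeff j * (x ^ j * qH q n x t)
        from funext key]
      have hint1 : Integrable (fun x => qH q k x t * qH q n x t) μ :=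
        hint _ ((qH_continuous q t k).mul hqHn)
      have hintj : ∀ j : ℕ, Integrable (fun x => x ^ j * qH q n x t) μ := fun j =>
        hint _ ((continuous_pow j).mul hqHn)
      rw [integral_add hint1 (integrable_finset_sum _ fun j _ => (hintj j).const_mul _),
        integral_finset_sum _ fun j _ => (hintj j).const_mul _]
      rw [horth n k, if_neg (by omega)]
      rw [zero_add]
      refine Finset.sum_eq_zero fun j hj => ?_
      rw [integral_const_mul, ih j (Finset.mem_range.mp hj)
        (lt_trans (Finset.mem_range.mp hj) hkn), mul_zero]

lemma entire_coeff_bound (f : ℂ → ℂ) (c : ℕ → ℂ)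
    (hf : ∀ z : ℂ, HasSum (fun k : ℕ => c k * z ^ k) (f z))
    (R : ℝ) (hR : 0 < R) (k : ℕ) :
    ‖c k‖ * R ^ k ≤ ⨆ z ∈ Metric.sphere (0 : ℂ) R, ‖f z‖ := by
  set p : FormalMultilinearSeries ℂ ℂ ℂ := FormalMultilinearSeries.ofScalars ℂ c with hp
  have hpnorm : ∀ m, ‖p m‖ = ‖c m‖ := by
    intro m
    have h1 := norm_smul (c m) (ContinuousMultilinearMap.mkPiAlgebraFin ℂ m ℂ)
    show ‖c m • ContinuousMultilinearMap.mkPiAlgebraFin ℂ m ℂ‖ = ‖c m‖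
    rw [h1, ContinuousMultilinearMap.norm_mkPiAlgebraFin, mul_one]
  have hcoeff : ∀ m, p.coeff m = c m := by
    intro m
    have h1 := FormalMultilinearSeries.ofScalars_apply_eq (c := c) (1 : ℂ) m
    exact FormalMultilinearSeries.coeff_ofScalars
  have hrad : p.radius = ⊤ := by
    refine top_le_iff.mp (ENNReal.le_of_forall_nnreal_lt fun r _ => ?_)
    have hs : Summable (fun m : ℕ => c m * ((r : ℝ) : ℂ) ^ m) := (hf _).summable
    obtain ⟨C, hC⟩ := (hs.tendsto_atTop_zero.norm.bddAbove_range).imp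
      (fun C hC => fun m => hC (Set.mem_range_self m))
    refine p.le_radius_of_bound C fun m => ?_
    have := hC m
    simpa [hpnorm, norm_mul, norm_pow, abs_of_nonneg r.coe_nonneg] using this
  have hball : HasFPowerSeriesOnBall f p 0 ⊤ :=
    { r_le := by rw [hrad]
      r_pos := ENNReal.zero_lt_top
      hasSum := fun {y} _ => by
        have := hf y
        simp only [zero_add]
        simpa [hcoeff, mul_comm] using this }
  have hdiff : Differentiable ℂ f := fun z =>
    (hball.analyticOnNhd z (EMetric.mem_ball.2 (edist_lt_top z 0))).differentiableAt
  have hpeq : p = cauchyPowerSeries f 0 R := by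
    set Rnn : NNReal := ⟨R, hR.le⟩ with hRnn
    have hRnn0 : (0 : ℝ) < Rnn := hR
    have hcball : HasFPowerSeriesOnBall f (cauchyPowerSeries f 0 (Rnn : ℝ)) 0 (Rnn : ENNReal) :=
      (hdiff.differentiableOn (s := Metric.closedBall (0:ℂ) (Rnn : ℝ))).hasFPowerSeriesOnBall
        hRnn0
    exact hball.hasFPowerSeriesAt.eq_formalMultilinearSeries hcball.hasFPowerSeriesAt
  set M := ⨆ z ∈ Metric.sphere (0 : ℂ) R, ‖f z‖ with hM
  have hbdd : BddAbove ((fun z => ‖f z‖) '' Metric.sphere (0:ℂ) R) :=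
    ((isCompact_sphere _ _).image_of_continuousOn
      (continuous_norm.comp hdiff.continuous).continuousOn).bddAbove
  have hsne : (Metric.sphere (0:ℂ) R).Nonempty := ⟨(R:ℂ), by simp [abs_of_pos hR]⟩
  have hbdd' : BddAbove (Set.range fun z : Metric.sphere (0:ℂ) R => ‖f z‖) := by
    obtain ⟨C, hC⟩ := hbdd
    refine ⟨C, ?_⟩
    rintro _ ⟨z, rfl⟩
    exact hC ⟨z, z.2, rfl⟩
  haveI : Nonempty (Metric.sphere (0:ℂ) R) := hsne.to_subtype
  have hMeq : (⨆ z : Metric.sphere (0:ℂ) R, ‖f z‖) = M := by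
    rw [hM]
    refine ciSup_subtype_fun (f := fun z => ‖f z‖) hbdd' ?_
    rw [Real.sSup_empty]
    exact le_ciSup_of_le hbdd' ⟨_, hsne.choose_spec⟩ (norm_nonneg _)
  have hfM : ∀ z ∈ Metric.sphere (0:ℂ) R, ‖f z‖ ≤ M := fun z hz => by
    rw [← hMeq]
    exact le_ciSup hbdd' (⟨z, hz⟩ : Metric.sphere (0:ℂ) R)
  have hM0 : 0 ≤ M := by
    have : (R : ℂ) ∈ Metric.sphere (0:ℂ) R := by
      simp [Complex.norm_real, abs_of_pos hR]
    exact le_trans (norm_nonneg _) (hfM _ this)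
  -- integral bound
  have hint : (∫ θ : ℝ in (0)..2 * Real.pi, ‖f (circleMap 0 R θ)‖) ≤ 2 * Real.pi * M := by
    have : ∀ θ ∈ Set.uIcc (0:ℝ) (2*Real.pi), ‖f (circleMap 0 R θ)‖ ≤ M := fun θ _ =>
      hfM _ (circleMap_mem_sphere _ hR.le θ)
    calc (∫ θ : ℝ in (0)..2 * Real.pi, ‖f (circleMap 0 R θ)‖)
        ≤ ‖∫ θ : ℝ in (0)..2 * Real.pi, ‖f (circleMap 0 R θ)‖‖ := le_abs_self _
      _ ≤ M * |2 * Real.pi - 0| := intervalIntegral.norm_integral_le_of_norm_le_const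
          (fun θ hθ => by simpa using hfM _ (circleMap_mem_sphere _ hR.le θ))
      _ = 2 * Real.pi * M := by
          rw [sub_zero, abs_of_pos Real.two_pi_pos]; ring
  have hckey : ‖c k‖ ≤ M * R⁻¹ ^ k := by
    have h1 : ‖cauchyPowerSeries f 0 R k‖ ≤
        ((2 * Real.pi)⁻¹ * ∫ θ : ℝ in (0)..2 * Real.pi, ‖f (circleMap 0 R θ)‖) * |R|⁻¹ ^ k :=
      norm_cauchyPowerSeries_le f 0 R k
    have h2 : ((2 * Real.pi)⁻¹ * ∫ θ : ℝ in (0)..2 * Real.pi, ‖f (circleMap 0 R θ)‖) ≤ M := by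
      rw [inv_mul_le_iff₀ Real.two_pi_pos]
      linarith [hint]
    calc ‖c k‖ = ‖p k‖ := (hpnorm k).symm
      _ = ‖cauchyPowerSeries f 0 R k‖ := by rw [hpeq]
      _ ≤ ((2 * Real.pi)⁻¹ * ∫ θ : ℝ in (0)..2 * Real.pi, ‖f (circleMap 0 R θ)‖) * |R|⁻¹ ^ k :=
          h1
      _ ≤ M * |R|⁻¹ ^ k := by
          apply mul_le_mul_of_nonneg_right h2
          positivity
      _ = M * R⁻¹ ^ k := by rw [abs_of_pos hR]
  calc ‖c k‖ * R ^ k ≤ M * R⁻¹ ^ k * R ^ k :=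
        mul_le_mul_of_nonneg_right hckey (by positivity)
    _ = M := by
        rw [mul_assoc, ← mul_pow, inv_mul_cancel₀ hR.ne', one_pow, mul_one]

end QHermiteHelpers

set_option maxHeartbeats 1000000 in
/-- if `f` is entire (sum of a power series with infinite radius of
convergence) and `R√(1−q) > 2√t`, then the q-Hermite expansion coefficients
`b_n(t) = t^{−n} ∫ f(x) h_n(x;t) γ_t(dx)` satisfy
`|b_n(t)| ≤ (max_{|z|=R}|f(z)|)·√([n]_q!)·(2/(R√(1−q)))^n·R√(1−q)/(R√(1−q) − 2√t)`. -/
theorem qHermite_coefficient_contour_bound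
    (q : ℝ) (hq0 : 0 < q) (hq1 : q < 1)
    (γ : ℝ → Measure ℝ)
    (hprob : ∀ t : ℝ, 0 < t → IsProbabilityMeasure (γ t))
    (hsupp : ∀ t : ℝ, 0 < t →
      γ t {x : ℝ | |x| ≤ 2 * Real.sqrt t / Real.sqrt (1 - q)}ᶜ = 0)
    (horth : ∀ t : ℝ, 0 < t → ∀ m n : ℕ,
      ∫ x, qH q n x t * qH q m x t ∂(γ t) = if m = n then qFact q n * t ^ n else 0)
    (hpush : ∀ t : ℝ, 0 < t → γ t = Measure.map (fun x => Real.sqrt t * x) (γ 1))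
    (t : ℝ) (ht : 0 < t)
    (f : ℂ → ℂ) (c : ℕ → ℂ) (hf : ∀ z : ℂ, HasSum (fun k : ℕ => c k * z ^ k) (f z))
    (R : ℝ) (hR : 0 < R) (hRt : 2 * Real.sqrt t < R * Real.sqrt (1 - q)) (n : ℕ) :
    ‖(t : ℂ) ^ (-(n : ℤ)) *
        ∫ x : ℝ, f x * (qH q n x t : ℂ) ∂(γ t)‖ ≤
      (⨆ z ∈ Metric.sphere (0 : ℂ) R, ‖f z‖) * Real.sqrt (qFact q n) *
        (2 / (R * Real.sqrt (1 - q))) ^ n *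
        (R * Real.sqrt (1 - q) / (R * Real.sqrt (1 - q) - 2 * Real.sqrt t)) := by
  haveI := hprob t ht
  have hs : 0 < Real.sqrt (1 - q) := Real.sqrt_pos.2 (by linarith)
  have hst : 0 < Real.sqrt t := Real.sqrt_pos.2 ht
  set s : ℝ := Real.sqrt (1 - q) with hsdef
  set μ : Measure ℝ := γ t with hμdef
  set B : ℝ := 2 * Real.sqrt t / s with hBdef
  have hB : 0 < B := by positivity
  have hBR : B < R := by
    rw [hBdef, div_lt_iff₀ hs]
    linarith
  have hae : ∀ᵐ x ∂μ, |x| ≤ B := ae_bdd (hsupp t ht)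
  have hint : ∀ g : ℝ → ℝ, Continuous g → Integrable g μ := fun g hg =>
    integrable_of_ae_bdd (hsupp t ht) g hg
  have hintC : ∀ g : ℝ → ℂ, Continuous g → Integrable g μ := fun g hg =>
    integrable_of_ae_bdd (hsupp t ht) g hg
  set M : ℝ := ⨆ z ∈ Metric.sphere (0 : ℂ) R, ‖f z‖ with hMdef
  have hM0 : 0 ≤ M := by
    have h := entire_coeff_bound f c hf R hR 0
    simp only [pow_zero, mul_one] at h
    exact le_trans (norm_nonneg _) h
  have hcb : ∀ k, ‖c k‖ ≤ M / R ^ k := fun k => by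
    rw [le_div_iff₀ (by positivity)]
    exact entire_coeff_bound f c hf R hR k
  have hqFn : 0 < qFact q n :=
    Finset.prod_pos fun i _ => Finset.sum_pos (fun j _ => pow_pos hq0 j)
      (Finset.nonempty_range_iff.2 (by omega))
  set S : ℝ := Real.sqrt (qFact q n * t ^ n) with hSdef
  have hS0 : 0 ≤ S := Real.sqrt_nonneg _
  have hqHn : Continuous (fun x => qH q n x t) := qH_continuous q t n
  have hH2 : ∫ x, qH q n x t ^ 2 ∂μ = qFact q n * t ^ n := by
    have h := horth t ht n n
    simp only [if_pos rfl] at h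
    rw [show (fun x => qH q n x t ^ 2) = fun x => qH q n x t * qH q n x t
      from funext fun x => sq (qH q n x t)]
    exact h
  have habsH : ∫ x, |qH q n x t| ∂μ ≤ S := by
    rw [hSdef, Real.le_sqrt (integral_nonneg fun x => abs_nonneg _) (by positivity)]
    rw [← hH2]
    exact sq_integral_abs_le (hint _ hqHn) (hint _ (hqHn.pow 2))
  set I : ℕ → ℝ := fun k => ∫ x, x ^ k * qH q n x t ∂μ with hIdef
  have hIzero : ∀ k, k < n → I k = 0 := qH_orth_monomial hint (horth t ht) n
  have hIbound : ∀ k, |I k| ≤ B ^ k * S := by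
    intro k
    have h1 : |I k| ≤ ∫ x, |x| ^ k * |qH q n x t| ∂μ := by
      simpa [Real.norm_eq_abs, abs_mul, abs_pow] using
        norm_integral_le_integral_norm (μ := μ) (f := fun x => x ^ k * qH q n x t)
    have h2 : ∫ x, |x| ^ k * |qH q n x t| ∂μ ≤ ∫ x, B ^ k * |qH q n x t| ∂μ := by
      refine integral_mono_ae (hint _ (((continuous_abs.pow k)).mul hqHn.abs))
        ((hint _ hqHn.abs).const_mul _) ?_
      refine hae.mono fun x hx => ?_
      show |x| ^ k * |qH q n x t| ≤ B ^ k * |qH q n x t|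
      exact mul_le_mul_of_nonneg_right (pow_le_pow_left₀ (abs_nonneg x) hx k)
        (abs_nonneg _)
    calc |I k| ≤ ∫ x, B ^ k * |qH q n x t| ∂μ := h1.trans h2
      _ = B ^ k * ∫ x, |qH q n x t| ∂μ := integral_const_mul _ _
      _ ≤ B ^ k * S := by
          exact mul_le_mul_of_nonneg_left habsH (by positivity)
  -- complex side
  set F : ℕ → ℝ → ℂ := fun k x => c k * (x : ℂ) ^ k * (qH q n x t : ℂ) with hFdef
  have hFcont : ∀ k, Continuous (F k) := fun k => by
    rw [hFdef]
    fun_prop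
  have hFint : ∀ k, Integrable (F k) μ := fun k => hintC _ (hFcont k)
  have hFval : ∀ k, ∫ x, F k x ∂μ = c k * (I k : ℂ) := by
    intro k
    have h1 : ∀ x : ℝ, F k x = c k * ((x ^ k * qH q n x t : ℝ) : ℂ) := by
      intro x; rw [hFdef]; push_cast; ring
    rw [show (fun x => F k x) = fun x => c k * ((x ^ k * qH q n x t : ℝ) : ℂ)
      from funext h1, integral_const_mul]
    congr 1
    exact integral_ofReal
  obtain ⟨Cn, hCn⟩ := (isCompact_Icc (a := -B) (b := B)).exists_bound_of_continuousOn
    hqHn.continuousOn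
  have hCn0 : 0 ≤ Cn := le_trans (norm_nonneg _)
    (hCn 0 (by constructor <;> linarith))
  have hnormint : ∀ k, ∫ x, ‖F k x‖ ∂μ ≤ ‖c k‖ * B ^ k * Cn := by
    intro k
    have hbd : ∀ᵐ x ∂μ, ‖F k x‖ ≤ ‖c k‖ * B ^ k * Cn := by
      refine hae.mono fun x hx => ?_
      rw [hFdef]
      have hxk : |x| ^ k ≤ B ^ k := pow_le_pow_left₀ (abs_nonneg x) hx k
      have hqb : |qH q n x t| ≤ Cn := by
        have := hCn x (abs_le.mp hx)
        simpa [Real.norm_eq_abs] using this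
      simp only [norm_mul, norm_pow, Complex.norm_real, Real.norm_eq_abs]
      calc ‖c k‖ * |x| ^ k * |qH q n x t|
          ≤ ‖c k‖ * B ^ k * |qH q n x t| :=
            mul_le_mul_of_nonneg_right
              (mul_le_mul_of_nonneg_left hxk (norm_nonneg _)) (abs_nonneg _)
        _ ≤ ‖c k‖ * B ^ k * Cn :=
            mul_le_mul_of_nonneg_left hqb (by positivity)
    calc ∫ x, ‖F k x‖ ∂μ ≤ ∫ _x, ‖c k‖ * B ^ k * Cn ∂μ :=
          integral_mono_ae (hFint k).norm (integrable_const _) hbd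
      _ = ‖c k‖ * B ^ k * Cn := by simp
  have hgeo : Summable (fun k : ℕ => (B / R) ^ k) :=
    summable_geometric_of_lt_one (by positivity) (by rw [div_lt_one hR]; exact hBR)
  have hcomp : ∀ k, ‖c k‖ * B ^ k ≤ M * (B / R) ^ k := by
    intro k
    calc ‖c k‖ * B ^ k ≤ M / R ^ k * B ^ k :=
          mul_le_mul_of_nonneg_right (hcb k) (by positivity)
      _ = M * (B / R) ^ k := by rw [div_pow]; ring
  have hsumnorm : Summable (fun k => ∫ x, ‖F k x‖ ∂μ) := by
    refine Summable.of_nonneg_of_le (fun k => integral_nonneg fun x => norm_nonneg _)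
      (fun k => (hnormint k).trans ?_) ((hgeo.mul_left (M * Cn)))
    calc ‖c k‖ * B ^ k * Cn ≤ M * (B / R) ^ k * Cn :=
          mul_le_mul_of_nonneg_right (hcomp k) hCn0
      _ = M * Cn * (B / R) ^ k := by ring
  have hfx : ∀ x : ℝ, f x * (qH q n x t : ℂ) = ∑' k, F k x := fun x =>
    (((hf x).mul_right (qH q n x t : ℂ)).tsum_eq).symm
  have hexch : ∫ x, f x * (qH q n x t : ℂ) ∂μ = ∑' k, c k * (I k : ℂ) := by
    rw [show (fun x : ℝ => f x * (qH q n x t : ℂ)) = fun x => ∑' k, F k x from funext hfx]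
    rw [← integral_tsum_of_summable_integral_norm hFint hsumnorm]
    exact tsum_congr hFval
  -- norm bound on the tsum
  have hterm_norm : ∀ k, ‖c k * (I k : ℂ)‖ = ‖c k‖ * |I k| := by
    intro k
    rw [norm_mul, Complex.norm_real, Real.norm_eq_abs]
  have hterm_bd : ∀ k, ‖c k‖ * |I k| ≤ M * S * (B / R) ^ k := by
    intro k
    calc ‖c k‖ * |I k| ≤ ‖c k‖ * (B ^ k * S) :=
          mul_le_mul_of_nonneg_left (hIbound k) (norm_nonneg _)
      _ = ‖c k‖ * B ^ k * S := by ring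
      _ ≤ M * (B / R) ^ k * S := mul_le_mul_of_nonneg_right (hcomp k) hS0
      _ = M * S * (B / R) ^ k := by ring
  have hsumnorm2 : Summable (fun k => ‖c k * (I k : ℂ)‖) := by
    refine Summable.of_nonneg_of_le (fun k => norm_nonneg _)
      (fun k => by rw [hterm_norm k]; exact hterm_bd k) (hgeo.mul_left (M * S))
  have htsum_bd : ∑' k, ‖c k * (I k : ℂ)‖ ≤ M * S * (B / R) ^ n * (1 - B / R)⁻¹ := by
    have h0 : ∀ k ∈ Finset.range n, ‖c k * (I k : ℂ)‖ = 0 := by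
      intro k hk
      rw [hterm_norm k, hIzero k (Finset.mem_range.mp hk), abs_zero, mul_zero]
    have hsplit := Summable.sum_add_tsum_nat_add (f := fun k => ‖c k * (I k : ℂ)‖) n hsumnorm2
    rw [Finset.sum_eq_zero h0, zero_add] at hsplit
    rw [← hsplit]
    have hshift : ∀ k : ℕ, ‖c (k + n) * (I (k + n) : ℂ)‖ ≤
        M * S * (B / R) ^ n * (B / R) ^ k := by
      intro k
      calc ‖c (k + n) * (I (k + n) : ℂ)‖ ≤ M * S * (B / R) ^ (k + n) := by
            rw [hterm_norm]; exact hterm_bd _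
        _ = M * S * (B / R) ^ n * (B / R) ^ k := by rw [pow_add]; ring
    calc ∑' k, ‖c (k + n) * (I (k + n) : ℂ)‖
        ≤ ∑' k, M * S * (B / R) ^ n * (B / R) ^ k :=
          Summable.tsum_le_tsum hshift ((summable_nat_add_iff n).2 hsumnorm2)
            (hgeo.mul_left _)
      _ = M * S * (B / R) ^ n * (1 - B / R)⁻¹ := by
          rw [tsum_mul_left, tsum_geometric_of_lt_one (by positivity)
            (by rw [div_lt_one hR]; exact hBR)]
  -- assemble
  rw [norm_mul, hexch]
  have habs_t : ‖(t : ℂ) ^ (-(n : ℤ))‖ = t ^ (-(n : ℤ)) := by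
    rw [norm_zpow, Complex.norm_real, Real.norm_eq_abs, abs_of_pos ht]
  rw [habs_t]
  have htn : (0:ℝ) < t ^ (-(n : ℤ)) := zpow_pos ht _
  have hmain : ‖∑' k, c k * (I k : ℂ)‖ ≤ M * S * (B / R) ^ n * (1 - B / R)⁻¹ :=
    le_trans (norm_tsum_le_tsum_norm hsumnorm2) htsum_bd
  calc t ^ (-(n : ℤ)) * ‖∑' k, c k * (I k : ℂ)‖
      ≤ t ^ (-(n : ℤ)) * (M * S * (B / R) ^ n * (1 - B / R)⁻¹) :=
        mul_le_mul_of_nonneg_left hmain htn.le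
    _ = M * Real.sqrt (qFact q n) * (2 / (R * s)) ^ n * (R * s / (R * s - 2 * Real.sqrt t)) := by
        have hSval : S = Real.sqrt (qFact q n) * Real.sqrt t ^ n := by
          rw [hSdef, Real.sqrt_mul hqFn.le]
          congr 1
          have h2 : (Real.sqrt t ^ n) ^ 2 = t ^ n := by
            rw [← pow_mul, mul_comm, pow_mul, Real.sq_sqrt ht.le]
          rw [← h2, Real.sqrt_sq (by positivity)]
        have htinv : t ^ (-(n : ℤ)) = ((Real.sqrt t) ^ n)⁻¹ * ((Real.sqrt t) ^ n)⁻¹ := by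
          rw [zpow_neg, zpow_natCast, ← mul_inv, ← mul_pow, Real.mul_self_sqrt ht.le]
        have hRs : (0:ℝ) < R * s := by positivity
        have hden : (0:ℝ) < R * s - 2 * Real.sqrt t := by linarith
        have hBRval : B / R = 2 * Real.sqrt t / (R * s) := by
          rw [hBdef]; field_simp
        have h1BR : 1 - B / R = (R * s - 2 * Real.sqrt t) / (R * s) := by
          rw [hBRval]; field_simp
        rw [hSval, htinv, h1BR, hBRval]
        rw [inv_div, div_pow, mul_pow 2 (Real.sqrt t), div_pow]
        field_simp
end

section
/- Let 0<q<1, s>0 and m≥1. Then for every x∈ℝ the monic continuous q-Hermite polynomials satisfy the identity x·(h_m(x;s) − h_m(x;qs)) − (h_{m+1}(x;s) − h_{m+1}(x;qs)) − s·[m]_q·(h_{m−1}(x;s) − h_{m−1}(x;qs)) = (1−q)·s·[m]_q·h_{m−1}(x;qs). Equivalently, with (𝒟_{q,s} g)(s) := (g(s) − g(qs))/((1−q)s), the operator A defined on the basis {h_j(·;s)} by A(h_m(·;s))(x) := x·(𝒟_{q,s} h_m(x;·))(s) − (𝒟_{q,s} h_{m+1}(x;·))(s) − s·[m]_q·(𝒟_{q,s}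 h_{m−1}(x;·))(s) satisfies A(h_m(·;s)) = [m]_q·h_{m−1}(·;qs). -/
/-- Lemma identifying the auxiliary operator `A` on q-Hermite polynomials:
for `s > 0` and `m ≥ 1`,
`x·(h_m(x;s) − h_m(x;qs)) − (h_{m+1}(x;s) − h_{m+1}(x;qs)) − s·[m]_q·(h_{m−1}(x;s) − h_{m−1}(x;qs))
  = (1−q)·s·[m]_q·h_{m−1}(x;qs)`,
i.e. `A(h_m(·;s)) = [m]_q·h_{m−1}(·;qs)`. -/
theorem qHermite_auxiliary_operator (q : ℝ) (hq0 : 0 < q) (hq1 : q < 1)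
    (s : ℝ) (hs : 0 < s) (m : ℕ) (hm : 1 ≤ m) (x : ℝ) :
    x * (qH q m x s - qH q m x (q * s)) -
      (qH q (m + 1) x s - qH q (m + 1) x (q * s)) -
      s * qNat q m * (qH q (m - 1) x s - qH q (m - 1) x (q * s)) =
    (1 - q) * s * qNat q m * qH q (m - 1) x (q * s) := by
  obtain ⟨k, rfl⟩ : ∃ k, m = k + 1 := ⟨m - 1, (Nat.succ_pred_eq_of_pos hm).symm⟩
  show x * (qH q (k+1) x s - qH q (k+1) x (q * s)) -
      (qH q (k+2) x s - qH q (k+2) x (q * s)) -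
      s * qNat q (k+1) * (qH q k x s - qH q k x (q * s)) =
    (1 - q) * s * qNat q (k+1) * qH q k x (q * s)
  simp only [qH]
  ring
end

section
/- Let 0<q<1 and let (B_s)_{s≥0} satisfy the q-Brownian hypotheses. Then for all 0 ≤ t₁ < t₂ ≤ u₁ < u₂: E[(B_{t₂} − B_{t₁})²·(B_{u₂} − B_{u₁})²] = (u₂ − u₁)·(t₂ − t₁). -/
open MeasureTheory Filter

lemma qH_one (q : ℝ) (x t : ℝ) : qH q 1 x t = x := rfl

lemma qH_two (q : ℝ) (x t : ℝ) : qH q 2 x t = x ^ 2 - t := by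
  show x * qH q 1 x t - t * qNat q 1 * qH q 0 x t = x ^ 2 - t
  simp [qH, qNat]
  ring

/-- bounded a.e. + a.e. strongly measurable → integrable (finite measure). -/
lemma integrable_of_ae_bdd_s16 {Ω : Type*} [MeasurableSpace Ω] {μ : Measure Ω}
    [IsFiniteMeasure μ] {f : Ω → ℝ} (hf : AEStronglyMeasurable f μ) {C : ℝ}
    (h : ∀ᵐ ω ∂μ, |f ω| ≤ C) : Integrable f μ := by
  refine ⟨hf, HasFiniteIntegral.of_bounded (C := C) ?_⟩
  simpa [Real.norm_eq_abs] using h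

section Main

variable {Ω : Type*} [m0 : MeasurableSpace Ω] {μ : Measure Ω} [IsProbabilityMeasure μ]
  {ℱ : Filtration ℝ m0} {q : ℝ} {B : ℝ → Ω → ℝ}

/-- Key lemma: `E[(B_u − B_s)² | ℱ_s] = u − s`. -/
lemma condexp_sq_incr
    (hadp : Adapted ℱ B)
    (hbdd : ∀ s : ℝ, 0 ≤ s → ∀ᵐ ω ∂μ, |B s ω| ≤ 2 * Real.sqrt s / Real.sqrt (1 - q))
    (hmart : ∀ (n : ℕ) (s u : ℝ), 0 ≤ s → s ≤ u →
      μ[fun ω => qH q n (B u ω) u | ℱ s] =ᵐ[μ] fun ω => qH q n (B s ω) s)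
    (s u : ℝ) (hs : 0 ≤ s) (hsu : s ≤ u) :
    μ[fun ω => (B u ω - B s ω) ^ 2 | ℱ s] =ᵐ[μ] fun _ => u - s := by
  have hu0 : 0 ≤ u := hs.trans hsu
  have hmS : StronglyMeasurable[m0] (B s) := (hadp s).stronglyMeasurable.mono (ℱ.le s)
  have hmU : StronglyMeasurable[m0] (B u) := (hadp u).stronglyMeasurable.mono (ℱ.le u)
  set Cs := 2 * Real.sqrt s / Real.sqrt (1 - q) with hCs
  set Cu := 2 * Real.sqrt u / Real.sqrt (1 - q) with hCu
  have hbS := hbdd s hs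
  have hbU := hbdd u hu0
  -- integrability facts
  have iU2 : Integrable (fun ω => qH q 2 (B u ω) u) μ := by
    refine integrable_of_ae_bdd_s16 ?_ (C := Cu ^ 2 + |u|) ?_
    · have e : (fun ω => qH q 2 (B u ω) u) = fun ω => B u ω ^ 2 - u := by
        funext ω; rw [qH_two]
      rw [e]
      exact ((hmU.pow 2).sub stronglyMeasurable_const).aestronglyMeasurable
    · filter_upwards [hbU] with ω h
      rw [qH_two]
      calc |B u ω ^ 2 - u| ≤ |B u ω ^ 2| + |u| := abs_sub _ _
        _ ≤ Cu ^ 2 + |u| := by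
            have : |B u ω ^ 2| = |B u ω| ^ 2 := by rw [abs_pow]
            rw [this]
            have : |B u ω| ^ 2 ≤ Cu ^ 2 := pow_le_pow_left₀ (abs_nonneg _) h 2
            linarith
  have iSU : Integrable ((B s) * (B u)) μ := by
    refine integrable_of_ae_bdd_s16 ((hmS.mul hmU).aestronglyMeasurable) (C := Cs * Cu) ?_
    filter_upwards [hbS, hbU] with ω h1 h2
    calc |(B s * B u) ω| = |B s ω| * |B u ω| := abs_mul _ _
      _ ≤ Cs * Cu := mul_le_mul h1 h2 (abs_nonneg _) ((abs_nonneg _).trans h1)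
  have iS2 : Integrable (fun ω => B s ω ^ 2) μ := by
    refine integrable_of_ae_bdd_s16 ((hmS.pow 2).aestronglyMeasurable) (C := Cs ^ 2) ?_
    filter_upwards [hbS] with ω h
    rw [abs_pow]
    exact pow_le_pow_left₀ (abs_nonneg _) h 2
  have iU : Integrable (B u) μ := by
    refine integrable_of_ae_bdd_s16 (hmU.aestronglyMeasurable) (C := Cu) hbU
  -- expand the square
  have hexp : (fun ω => (B u ω - B s ω) ^ 2)
      = ((fun ω => qH q 2 (B u ω) u) + (fun _ => u) - (2 : ℝ) • ((B s) * (B u))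
        + fun ω => B s ω ^ 2) := by
    funext ω
    simp only [Pi.add_apply, Pi.sub_apply, Pi.smul_apply, Pi.mul_apply, smul_eq_mul, qH_two]
    ring
  rw [hexp]
  have iSum : Integrable ((fun ω => qH q 2 (B u ω) u) + (fun _ : Ω => u)
      - (2 : ℝ) • ((B s) * (B u))) μ :=
    ((iU2.add (integrable_const u)).sub (iSU.smul (2 : ℝ)))
  refine (condExp_add iSum iS2 (ℱ s)).trans ?_
  have h1 : μ[(fun ω => qH q 2 (B u ω) u) + (fun _ : Ω => u)
      - (2 : ℝ) • ((B s) * (B u)) | ℱ s]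
      =ᵐ[μ] fun ω => (B s ω ^ 2 - s) + u - 2 * (B s ω ^ 2) := by
    refine (condExp_sub (iU2.add (integrable_const u)) (iSU.smul (2 : ℝ)) (ℱ s)).trans ?_
    have ha : μ[(fun ω => qH q 2 (B u ω) u) + (fun _ : Ω => u) | ℱ s]
        =ᵐ[μ] fun ω => (B s ω ^ 2 - s) + u := by
      refine (condExp_add iU2 (integrable_const u) (ℱ s)).trans ?_
      have h2 := hmart 2 s u hs hsu
      have hc : μ[(fun _ : Ω => u) | ℱ s] =ᵐ[μ] fun _ => u := by
        rw [condExp_const (ℱ.le s)]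
      filter_upwards [h2, hc] with ω hω hωc
      rw [Pi.add_apply, hω, hωc, qH_two]
    have hb : μ[(2 : ℝ) • ((B s) * (B u)) | ℱ s] =ᵐ[μ] fun ω => 2 * (B s ω ^ 2) := by
      refine (condExp_smul (2 : ℝ) ((B s) * (B u)) (ℱ s)).trans ?_
      have hmul : μ[(B s) * (B u) | ℱ s] =ᵐ[μ] (B s) * μ[(B u) | ℱ s] :=
        condExp_mul_of_stronglyMeasurable_left (hadp s).stronglyMeasurable iSU iU
      have hBu : μ[(B u) | ℱ s] =ᵐ[μ] (B s) := by
        have := hmart 1 s u hs hsu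
        simpa [qH_one] using this
      filter_upwards [hmul, hBu] with ω h h'
      simp only [Pi.smul_apply, smul_eq_mul, h, Pi.mul_apply, h']
      ring
    filter_upwards [ha, hb] with ω h h'
    simp only [Pi.sub_apply, h, h']
  have h3' : μ[fun ω => B s ω ^ 2 | ℱ s] =ᵐ[μ] fun ω => B s ω ^ 2 := by
    have := condExp_of_stronglyMeasurable (μ := μ) (ℱ.le s)
      (f := fun ω => B s ω ^ 2) ((hadp s).stronglyMeasurable.pow 2) iS2
    rw [this]
  filter_upwards [h1, h3'] with ω hω hω'
  simp only [Pi.add_apply, hω, hω']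
  ring

end Main

/-- for the q-Brownian motion and `0 ≤ t₁ < t₂ ≤ u₁ < u₂`,
`E[(B_{t₂} − B_{t₁})²(B_{u₂} − B_{u₁})²] = (u₂ − u₁)(t₂ − t₁)`. -/
theorem q_brownian_square_square_moment
    {Ω : Type*} [m0 : MeasurableSpace Ω] (μ : Measure Ω) [IsProbabilityMeasure μ]
    (ℱ : Filtration ℝ m0) (q : ℝ) (hq0 : 0 < q) (hq1 : q < 1)
    (B : ℝ → Ω → ℝ) (hadp : Adapted ℱ B) (hB0 : ∀ ω, B 0 ω = 0)
    (hbdd : ∀ s : ℝ, 0 ≤ s → ∀ᵐ ω ∂μ, |B s ω| ≤ 2 * Real.sqrt s / Real.sqrt (1 - q))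
    (hmart : ∀ (n : ℕ) (s u : ℝ), 0 ≤ s → s ≤ u →
      μ[fun ω => qH q n (B u ω) u | ℱ s] =ᵐ[μ] fun ω => qH q n (B s ω) s)
    (horth : ∀ s : ℝ, 0 < s → ∀ m n : ℕ,
      ∫ ω, qH q n (B s ω) s * qH q m (B s ω) s ∂μ =
        if m = n then qFact q n * s ^ n else 0)
    (t₁ t₂ u₁ u₂ : ℝ) (ht₁ : 0 ≤ t₁) (ht : t₁ < t₂) (htu : t₂ ≤ u₁) (hu : u₁ < u₂) :
    ∫ ω, (B t₂ ω - B t₁ ω) ^ 2 * (B u₂ ω - B u₁ ω) ^ 2 ∂μ = (u₂ - u₁) * (t₂ - t₁) := by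
  have ht₂ : 0 ≤ t₂ := ht₁.trans ht.le
  have hu₁ : 0 ≤ u₁ := ht₂.trans htu
  have hu₂ : 0 ≤ u₂ := hu₁.trans hu.le
  set X : Ω → ℝ := fun ω => (B t₂ ω - B t₁ ω) ^ 2 with hX
  set Y : Ω → ℝ := fun ω => (B u₂ ω - B u₁ ω) ^ 2 with hY
  -- measurability
  have hXsm : StronglyMeasurable[ℱ u₁] X := by
    exact (((hadp t₂).stronglyMeasurable.mono (ℱ.mono htu)).sub
      ((hadp t₁).stronglyMeasurable.mono (ℱ.mono (ht.le.trans htu)))).pow 2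
  have hXm0 : StronglyMeasurable[m0] X := hXsm.mono (ℱ.le u₁)
  have hYm0 : StronglyMeasurable[m0] Y :=
    (((hadp u₂).stronglyMeasurable.mono (ℱ.le u₂)).sub ((hadp u₁).stronglyMeasurable.mono (ℱ.le u₁))).pow 2
  -- bounds
  set C : ℝ → ℝ := fun s => 2 * Real.sqrt s / Real.sqrt (1 - q) with hC
  have hCnn : ∀ s, 0 ≤ s → 0 ≤ C s := by
    intro s hs
    apply div_nonneg
    · positivity
    · exact Real.sqrt_nonneg _
  have hXbd : ∀ᵐ ω ∂μ, |X ω| ≤ (C t₂ + C t₁) ^ 2 := by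
    filter_upwards [hbdd t₁ ht₁, hbdd t₂ ht₂] with ω h1 h2
    have : |B t₂ ω - B t₁ ω| ≤ C t₂ + C t₁ :=
      (abs_sub _ _).trans (add_le_add h2 h1)
    calc |X ω| = |B t₂ ω - B t₁ ω| ^ 2 := by rw [hX]; rw [abs_pow]
      _ ≤ (C t₂ + C t₁) ^ 2 := pow_le_pow_left₀ (abs_nonneg _) this 2
  have hYbd : ∀ᵐ ω ∂μ, |Y ω| ≤ (C u₂ + C u₁) ^ 2 := by
    filter_upwards [hbdd u₁ hu₁, hbdd u₂ hu₂] with ω h1 h2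
    have : |B u₂ ω - B u₁ ω| ≤ C u₂ + C u₁ :=
      (abs_sub _ _).trans (add_le_add h2 h1)
    calc |Y ω| = |B u₂ ω - B u₁ ω| ^ 2 := by rw [hY]; rw [abs_pow]
      _ ≤ (C u₂ + C u₁) ^ 2 := pow_le_pow_left₀ (abs_nonneg _) this 2
  -- integrabilities
  have iX : Integrable X μ := integrable_of_ae_bdd_s16 hXm0.aestronglyMeasurable hXbd
  have iY : Integrable Y μ := integrable_of_ae_bdd_s16 hYm0.aestronglyMeasurable hYbd
  have iXY : Integrable (X * Y) μ := by
    refine integrable_of_ae_bdd_s16 ((hXm0.mul hYm0).aestronglyMeasurable)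
      (C := (C t₂ + C t₁) ^ 2 * (C u₂ + C u₁) ^ 2) ?_
    filter_upwards [hXbd, hYbd] with ω h1 h2
    calc |(X * Y) ω| = |X ω| * |Y ω| := abs_mul _ _
      _ ≤ (C t₂ + C t₁) ^ 2 * (C u₂ + C u₁) ^ 2 :=
        mul_le_mul h1 h2 (abs_nonneg _) ((abs_nonneg _).trans h1)
  -- conditional expectations
  have hYce : μ[Y | ℱ u₁] =ᵐ[μ] fun _ => u₂ - u₁ :=
    condexp_sq_incr hadp hbdd hmart u₁ u₂ hu₁ hu.le
  have hXce : μ[X | ℱ t₁] =ᵐ[μ] fun _ => t₂ - t₁ :=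
    condexp_sq_incr hadp hbdd hmart t₁ t₂ ht₁ ht.le
  -- E[X] = t₂ - t₁
  have hEX : ∫ ω, X ω ∂μ = t₂ - t₁ := by
    rw [← integral_condExp (ℱ.le t₁) (f := X), integral_congr_ae hXce]
    simp
  -- E[XY] = (u₂-u₁) E[X]
  have key : μ[X * Y | ℱ u₁] =ᵐ[μ] fun ω => X ω * (u₂ - u₁) := by
    refine (condExp_mul_of_stronglyMeasurable_left hXsm iXY iY).trans ?_
    filter_upwards [hYce] with ω h
    simp only [Pi.mul_apply, h]
  calc ∫ ω, (B t₂ ω - B t₁ ω) ^ 2 * (B u₂ ω - B u₁ ω) ^ 2 ∂μ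
      = ∫ ω, (X * Y) ω ∂μ := rfl
    _ = ∫ ω, (μ[X * Y | ℱ u₁]) ω ∂μ := (integral_condExp (ℱ.le u₁)).symm
    _ = ∫ ω, X ω * (u₂ - u₁) ∂μ := integral_congr_ae key
    _ = (∫ ω, X ω ∂μ) * (u₂ - u₁) := by rw [integral_mul_const]
    _ = (u₂ - u₁) * (t₂ - t₁) := by rw [hEX]; ring
end

section
/- Let 0<q<1 and let (B_s)_{s≥0} satisfy the q-Brownian hypotheses. Then for all 0 ≤ t₁ < t₂ ≤ u₁ < u₂: E[(B_{t₂} − B_{t₁})·(B_{u₂} − B_{u₁})³] = −(1−q)·(u₂ − u₁)·(t₂ − t₁). -/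
open MeasureTheory Filter

namespace QBMaux

variable {Ω : Type*} {m0 : MeasurableSpace Ω} {μ : Measure Ω}

/-- a.e.-bounded, a.e.-strongly-measurable real function. -/
def Bdd (μ : Measure Ω) (f : Ω → ℝ) : Prop :=
  AEStronglyMeasurable f μ ∧ ∃ c : ℝ, ∀ᵐ ω ∂μ, |f ω| ≤ c

lemma Bdd.integrable [IsFiniteMeasure μ] {f : Ω → ℝ} (hf : Bdd μ f) :
    Integrable f μ := by
  obtain ⟨hm, c, hc⟩ := hf
  exact (integrable_const c).mono' hm (by simpa [Real.norm_eq_abs] using hc)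

lemma Bdd.const (c : ℝ) : Bdd μ (fun _ => c) :=
  ⟨aestronglyMeasurable_const, |c|, Filter.Eventually.of_forall fun _ => le_rfl⟩

lemma Bdd.mul {f g : Ω → ℝ} (hf : Bdd μ f) (hg : Bdd μ g) :
    Bdd μ (fun ω => f ω * g ω) := by
  obtain ⟨hmf, c, hc⟩ := hf; obtain ⟨hmg, d, hd⟩ := hg
  refine ⟨hmf.mul hmg, |c| * |d|, ?_⟩
  filter_upwards [hc, hd] with ω h1 h2
  rw [abs_mul]
  exact mul_le_mul (h1.trans (le_abs_self c)) (h2.trans (le_abs_self d)) (abs_nonneg _)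
    (abs_nonneg _)

lemma Bdd.add {f g : Ω → ℝ} (hf : Bdd μ f) (hg : Bdd μ g) :
    Bdd μ (fun ω => f ω + g ω) := by
  obtain ⟨hmf, c, hc⟩ := hf; obtain ⟨hmg, d, hd⟩ := hg
  refine ⟨hmf.add hmg, c + d, ?_⟩
  filter_upwards [hc, hd] with ω h1 h2
  exact (abs_add_le _ _).trans (add_le_add h1 h2)

lemma Bdd.sub {f g : Ω → ℝ} (hf : Bdd μ f) (hg : Bdd μ g) :
    Bdd μ (fun ω => f ω - g ω) := by
  obtain ⟨hmf, c, hc⟩ := hf; obtain ⟨hmg, d, hd⟩ := hg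
  refine ⟨hmf.sub hmg, c + d, ?_⟩
  filter_upwards [hc, hd] with ω h1 h2
  exact (abs_sub _ _).trans (add_le_add h1 h2)

lemma Bdd.pow {f : Ω → ℝ} (hf : Bdd μ f) (k : ℕ) :
    Bdd μ (fun ω => f ω ^ k) := by
  induction k with
  | zero => simpa using Bdd.const (μ := μ) 1
  | succ n ih => simpa [pow_succ] using ih.mul hf

/-- pull-out: `∫ X·g = ∫ X·h` when `X` is `m`-measurable and bounded, `g` bounded,
and `μ[g|m] =ᵐ h`. -/
lemma pull [IsProbabilityMeasure μ] {m : MeasurableSpace Ω} (hm : m ≤ m0)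
    {X g h : Ω → ℝ} (hX : StronglyMeasurable[m] X) (hXb : Bdd μ X) (hg : Bdd μ g)
    (hcond : μ[g|m] =ᵐ[μ] h) :
    ∫ ω, X ω * g ω ∂μ = ∫ ω, X ω * h ω ∂μ := by
  have hgi : Integrable g μ := hg.integrable
  have hXgi : Integrable (X * g) μ := (hXb.mul hg).integrable
  calc ∫ ω, X ω * g ω ∂μ
      = ∫ ω, (μ[X * g|m]) ω ∂μ := (integral_condExp hm).symm
    _ = ∫ ω, (X * μ[g|m]) ω ∂μ :=
        integral_congr_ae (condExp_mul_of_stronglyMeasurable_left hX hXgi hgi)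
    _ = ∫ ω, X ω * h ω ∂μ :=
        integral_congr_ae (hcond.mono fun ω hω => by simp [hω])

lemma split_lin [IsFiniteMeasure μ] {f g h : Ω → ℝ} (c : ℝ)
    (hg : Bdd μ g) (hh : Bdd μ h) (hfg : ∀ ω, f ω = g ω + c * h ω) :
    ∫ ω, f ω ∂μ = ∫ ω, g ω ∂μ + c * ∫ ω, h ω ∂μ := by
  have i2 : Integrable (fun ω => c * h ω) μ := hh.integrable.const_mul c
  rw [show (fun ω => f ω) = fun ω => g ω + c * h ω from funext hfg,
    integral_add hg.integrable i2, integral_const_mul]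

lemma split_lin4 [IsFiniteMeasure μ] {f g₁ g₂ g₃ g₄ : Ω → ℝ} (c₁ c₂ c₃ c₄ : ℝ)
    (h₁ : Bdd μ g₁) (h₂ : Bdd μ g₂) (h₃ : Bdd μ g₃) (h₄ : Bdd μ g₄)
    (hfg : ∀ ω, f ω = c₁ * g₁ ω + c₂ * g₂ ω + c₃ * g₃ ω + c₄ * g₄ ω) :
    ∫ ω, f ω ∂μ = c₁ * ∫ ω, g₁ ω ∂μ + c₂ * ∫ ω, g₂ ω ∂μ + c₃ * ∫ ω, g₃ ω ∂μ
      + c₄ * ∫ ω, g₄ ω ∂μ := by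
  have i1 : Integrable (fun ω => c₁ * g₁ ω) μ := h₁.integrable.const_mul c₁
  have i2 : Integrable (fun ω => c₂ * g₂ ω) μ := h₂.integrable.const_mul c₂
  have i3 : Integrable (fun ω => c₃ * g₃ ω) μ := h₃.integrable.const_mul c₃
  have i4 : Integrable (fun ω => c₄ * g₄ ω) μ := h₄.integrable.const_mul c₄
  have i12 : Integrable (fun ω => c₁ * g₁ ω + c₂ * g₂ ω) μ := i1.add i2
  have i123 : Integrable (fun ω => c₁ * g₁ ω + c₂ * g₂ ω + c₃ * g₃ ω) μ := i12.add i3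
  rw [show (fun ω => f ω)
      = fun ω => c₁ * g₁ ω + c₂ * g₂ ω + c₃ * g₃ ω + c₄ * g₄ ω from funext hfg,
    integral_add i123 i4, integral_add i12 i3, integral_add i1 i2,
    integral_const_mul, integral_const_mul, integral_const_mul, integral_const_mul]

end QBMaux

/-- for the q-Brownian motion and `0 ≤ t₁ < t₂ ≤ u₁ < u₂`,
`E[(B_{t₂} − B_{t₁})(B_{u₂} − B_{u₁})³] = −(1−q)(u₂ − u₁)(t₂ − t₁)`. -/
theorem q_brownian_first_cubed_moment
    {Ω : Type*} [m0 : MeasurableSpace Ω] (μ : Measure Ω) [IsProbabilityMeasure μ]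
    (ℱ : Filtration ℝ m0) (q : ℝ) (hq0 : 0 < q) (hq1 : q < 1)
    (B : ℝ → Ω → ℝ) (hadp : Adapted ℱ B) (hB0 : ∀ ω, B 0 ω = 0)
    (hbdd : ∀ s : ℝ, 0 ≤ s → ∀ᵐ ω ∂μ, |B s ω| ≤ 2 * Real.sqrt s / Real.sqrt (1 - q))
    (hmart : ∀ (n : ℕ) (s u : ℝ), 0 ≤ s → s ≤ u →
      μ[fun ω => qH q n (B u ω) u | ℱ s] =ᵐ[μ] fun ω => qH q n (B s ω) s)
    (horth : ∀ s : ℝ, 0 < s → ∀ m n : ℕ,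
      ∫ ω, qH q n (B s ω) s * qH q m (B s ω) s ∂μ =
        if m = n then qFact q n * s ^ n else 0)
    (t₁ t₂ u₁ u₂ : ℝ) (ht₁ : 0 ≤ t₁) (ht : t₁ < t₂) (htu : t₂ ≤ u₁) (hu : u₁ < u₂) :
    ∫ ω, (B t₂ ω - B t₁ ω) * (B u₂ ω - B u₁ ω) ^ 3 ∂μ =
      -(1 - q) * (u₂ - u₁) * (t₂ - t₁) := by
  classical
  have h0t₂ : (0:ℝ) < t₂ := lt_of_le_of_lt ht₁ ht
  have h0u₁ : (0:ℝ) ≤ u₁ := h0t₂.le.trans htu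
  have h0u₂ : (0:ℝ) ≤ u₂ := h0u₁.trans hu.le
  -- small qH values
  have qH1 : ∀ x t : ℝ, qH q 1 x t = x := fun _ _ => rfl
  have qH2 : ∀ x t : ℝ, qH q 2 x t = x ^ 2 - t := by
    intro x t
    show x * qH q 1 x t - t * qNat q 1 * qH q 0 x t = x ^ 2 - t
    simp [qH, qNat]
    ring
  have qH3 : ∀ x t : ℝ, qH q 3 x t = x ^ 3 - (2 + q) * t * x := by
    intro x t
    show x * qH q 2 x t - t * qNat q 2 * qH q 1 x t = x ^ 3 - (2 + q) * t * x
    rw [qH2, qH1]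
    simp [qNat, Finset.sum_range_succ]
    ring
  have qF1 : qFact q 1 = 1 := by simp [qFact, qNat]
  -- measurability and boundedness
  have mB : ∀ s : ℝ, 0 ≤ s → QBMaux.Bdd μ (B s) := fun s hs =>
    ⟨((hadp s).mono (ℱ.le s) le_rfl).aestronglyMeasurable, _, hbdd s hs⟩
  -- pull-out transfers
  have pull1 : ∀ s u : ℝ, 0 ≤ s → s ≤ u → ∀ X : Ω → ℝ,
      StronglyMeasurable[ℱ s] X → QBMaux.Bdd μ X →
      ∫ ω, X ω * B u ω ∂μ = ∫ ω, X ω * B s ω ∂μ := by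
    intro s u hs hsu X hX hXb
    have h := hmart 1 s u hs hsu
    simp only [qH1] at h
    exact QBMaux.pull (ℱ.le s) hX hXb (mB u (hs.trans hsu)) h
  have pull2 : ∀ s u : ℝ, 0 ≤ s → s ≤ u → ∀ X : Ω → ℝ,
      StronglyMeasurable[ℱ s] X → QBMaux.Bdd μ X →
      ∫ ω, X ω * ((B u ω) ^ 2 - u) ∂μ = ∫ ω, X ω * ((B s ω) ^ 2 - s) ∂μ := by
    intro s u hs hsu X hX hXb
    have h := hmart 2 s u hs hsu
    simp only [qH2] at h
    exact QBMaux.pull (ℱ.le s) hX hXb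
      (((mB u (hs.trans hsu)).pow 2).sub (QBMaux.Bdd.const u)) h
  have pull3 : ∀ s u : ℝ, 0 ≤ s → s ≤ u → ∀ X : Ω → ℝ,
      StronglyMeasurable[ℱ s] X → QBMaux.Bdd μ X →
      ∫ ω, X ω * ((B u ω) ^ 3 - (2 + q) * u * (B u ω)) ∂μ
        = ∫ ω, X ω * ((B s ω) ^ 3 - (2 + q) * s * (B s ω)) ∂μ := by
    intro s u hs hsu X hX hXb
    have h := hmart 3 s u hs hsu
    simp only [qH3] at h
    exact QBMaux.pull (ℱ.le s) hX hXb
      (((mB u (hs.trans hsu)).pow 3).sub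
        ((QBMaux.Bdd.const ((2 + q) * u)).mul (mB u (hs.trans hsu)))) h
  -- the increment X = B t₂ - B t₁
  have hXt₂ : StronglyMeasurable[ℱ t₂] (fun ω => B t₂ ω - B t₁ ω) :=
    (hadp t₂).stronglyMeasurable.sub ((hadp t₁).stronglyMeasurable.mono (ℱ.mono ht.le))
  have hXu₁ : StronglyMeasurable[ℱ u₁] (fun ω => B t₂ ω - B t₁ ω) :=
    hXt₂.mono (ℱ.mono htu)
  have hXb : QBMaux.Bdd μ (fun ω => B t₂ ω - B t₁ ω) := (mB t₂ h0t₂.le).sub (mB t₁ ht₁)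
  have hXBu₁sm : StronglyMeasurable[ℱ u₁] (fun ω => (B t₂ ω - B t₁ ω) * B u₁ ω) :=
    hXu₁.mul (hadp u₁).stronglyMeasurable
  have hXBu₁b : QBMaux.Bdd μ (fun ω => (B t₂ ω - B t₁ ω) * B u₁ ω) :=
    hXb.mul (mB u₁ h0u₁)
  have hXBu₁sqsm : StronglyMeasurable[ℱ u₁]
      (fun ω => (B t₂ ω - B t₁ ω) * (B u₁ ω) ^ 2) := hXu₁.mul ((hadp u₁).stronglyMeasurable.pow 2)
  have hXBu₁sqb : QBMaux.Bdd μ (fun ω => (B t₂ ω - B t₁ ω) * (B u₁ ω) ^ 2) :=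
    hXb.mul ((mB u₁ h0u₁).pow 2)
  -- second moments
  have horth1 : ∫ ω, B t₂ ω * B t₂ ω ∂μ = t₂ := by
    have h := horth t₂ h0t₂ 1 1
    simpa [qH1, qF1] using h
  have horth0 : ∫ ω, B t₁ ω * B t₁ ω ∂μ = t₁ := by
    rcases eq_or_lt_of_le ht₁ with h0 | h0
    · simp [← h0, hB0]
    · have h := horth t₁ h0 1 1
      simpa [qH1, qF1] using h
  -- J = ∫ X · B u₁ = t₂ - t₁
  have Jt : ∫ ω, (B t₂ ω - B t₁ ω) * B u₁ ω ∂μ = t₂ - t₁ := by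
    rw [pull1 t₂ u₁ h0t₂.le htu _ hXt₂ hXb]
    have e : ∫ ω, (B t₂ ω - B t₁ ω) * B t₂ ω ∂μ
        = ∫ ω, B t₂ ω * B t₂ ω ∂μ + (-1 : ℝ) * ∫ ω, B t₁ ω * B t₂ ω ∂μ :=
      QBMaux.split_lin (-1) ((mB t₂ h0t₂.le).mul (mB t₂ h0t₂.le))
        ((mB t₁ ht₁).mul (mB t₂ h0t₂.le)) (fun ω => by ring)
    rw [e, pull1 t₁ t₂ ht₁ ht.le (B t₁) (hadp t₁).stronglyMeasurable (mB t₁ ht₁), horth1, horth0]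
    ring
  -- term a
  have ha : ∫ ω, (B t₂ ω - B t₁ ω) * (B u₂ ω) ^ 3 ∂μ
      = ∫ ω, (B t₂ ω - B t₁ ω) * (B u₁ ω) ^ 3 ∂μ + (2 + q) * (u₂ - u₁) * (t₂ - t₁) := by
    have s1 : ∫ ω, (B t₂ ω - B t₁ ω) * (B u₂ ω) ^ 3 ∂μ
        = ∫ ω, (B t₂ ω - B t₁ ω) * ((B u₂ ω) ^ 3 - (2 + q) * u₂ * (B u₂ ω)) ∂μ
          + ((2 + q) * u₂) * ∫ ω, (B t₂ ω - B t₁ ω) * B u₂ ω ∂μ :=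
      QBMaux.split_lin _
        (hXb.mul (((mB u₂ h0u₂).pow 3).sub
          ((QBMaux.Bdd.const ((2 + q) * u₂)).mul (mB u₂ h0u₂))))
        (hXb.mul (mB u₂ h0u₂)) (fun ω => by ring)
    have s2 : ∫ ω, (B t₂ ω - B t₁ ω) * ((B u₁ ω) ^ 3 - (2 + q) * u₁ * (B u₁ ω)) ∂μ
        = ∫ ω, (B t₂ ω - B t₁ ω) * (B u₁ ω) ^ 3 ∂μ
          + (-((2 + q) * u₁)) * ∫ ω, (B t₂ ω - B t₁ ω) * B u₁ ω ∂μ :=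
      QBMaux.split_lin _ (hXb.mul ((mB u₁ h0u₁).pow 3)) hXBu₁b (fun ω => by ring)
    rw [s1, pull3 u₁ u₂ h0u₁ hu.le _ hXu₁ hXb, s2,
      pull1 u₁ u₂ h0u₁ hu.le _ hXu₁ hXb, Jt]
    ring
  -- term b
  have hb : ∫ ω, ((B t₂ ω - B t₁ ω) * B u₁ ω) * (B u₂ ω) ^ 2 ∂μ
      = ∫ ω, (B t₂ ω - B t₁ ω) * (B u₁ ω) ^ 3 ∂μ + (u₂ - u₁) * (t₂ - t₁) := by
    have s1 : ∫ ω, ((B t₂ ω - B t₁ ω) * B u₁ ω) * (B u₂ ω) ^ 2 ∂μ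
        = ∫ ω, ((B t₂ ω - B t₁ ω) * B u₁ ω) * ((B u₂ ω) ^ 2 - u₂) ∂μ
          + u₂ * ∫ ω, (B t₂ ω - B t₁ ω) * B u₁ ω ∂μ :=
      QBMaux.split_lin _
        (hXBu₁b.mul (((mB u₂ h0u₂).pow 2).sub (QBMaux.Bdd.const u₂)))
        hXBu₁b (fun ω => by ring)
    have s2 : ∫ ω, ((B t₂ ω - B t₁ ω) * B u₁ ω) * ((B u₁ ω) ^ 2 - u₁) ∂μ
        = ∫ ω, (B t₂ ω - B t₁ ω) * (B u₁ ω) ^ 3 ∂μ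
          + (-u₁) * ∫ ω, (B t₂ ω - B t₁ ω) * B u₁ ω ∂μ :=
      QBMaux.split_lin _ (hXb.mul ((mB u₁ h0u₁).pow 3)) hXBu₁b (fun ω => by ring)
    rw [s1, pull2 u₁ u₂ h0u₁ hu.le _ hXBu₁sm hXBu₁b, s2, Jt]
    ring
  -- term c
  have hc : ∫ ω, ((B t₂ ω - B t₁ ω) * (B u₁ ω) ^ 2) * B u₂ ω ∂μ
      = ∫ ω, (B t₂ ω - B t₁ ω) * (B u₁ ω) ^ 3 ∂μ := by
    rw [pull1 u₁ u₂ h0u₁ hu.le _ hXBu₁sqsm hXBu₁sqb]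
    exact integral_congr_ae (Filter.Eventually.of_forall fun ω => by ring)
  -- expand and conclude
  have main : ∫ ω, (B t₂ ω - B t₁ ω) * (B u₂ ω - B u₁ ω) ^ 3 ∂μ
      = 1 * (∫ ω, (B t₂ ω - B t₁ ω) * (B u₂ ω) ^ 3 ∂μ)
        + (-3) * (∫ ω, ((B t₂ ω - B t₁ ω) * B u₁ ω) * (B u₂ ω) ^ 2 ∂μ)
        + 3 * (∫ ω, ((B t₂ ω - B t₁ ω) * (B u₁ ω) ^ 2) * B u₂ ω ∂μ)
        + (-1) * (∫ ω, (B t₂ ω - B t₁ ω) * (B u₁ ω) ^ 3 ∂μ) :=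
    QBMaux.split_lin4 _ _ _ _ (hXb.mul ((mB u₂ h0u₂).pow 3))
      (hXBu₁b.mul ((mB u₂ h0u₂).pow 2)) (hXBu₁sqb.mul (mB u₂ h0u₂))
      (hXb.mul ((mB u₁ h0u₁).pow 3)) (fun ω => by ring)
  rw [main, ha, hb, hc]
  ring
end
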